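/- In the group G = ⟨B, h, s | [h,a]=[h,b]=[h,c]=1, (h²)^s = ha⟩ with B = ⟨a,b,c | a²=1, [a,a^b]=1, [b,c]=1, a^c = a·a^b⟩, for every i ∈ ℤ and g = (sb^i)⁻¹, one has g⟨h²⟩g⁻¹ = ⟨h·a^{b^i}⟩, and moreover (h·a^{b^i})² = h², so that g⟨h²⟩g⁻¹ = ⟨h²⟩ ∪ ⟨h²⟩·h·a^{b^i}. -/

import Mathlib

open Subgroup

/-- Relators of `G = ⟨a,b,c,h,s ∣ a²=1, [a,a^b]=1, [b,c]=1, a^c=a·a^b,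
[h,a]=[h,b]=[h,c]=1, (h²)^s = ha⟩`; generators `0 ↦ a`, `1 ↦ b`, `2 ↦ c`, `3 ↦ h`,
`4 ↦ s`. -/
def Grels : Set (FreeGroup (Fin 5)) :=
  let a := FreeGroup.of (0 : Fin 5)
  let b := FreeGroup.of (1 : Fin 5)
  let c := FreeGroup.of (2 : Fin 5)
  let h := FreeGroup.of (3 : Fin 5)
  let s := FreeGroup.of (4 : Fin 5)
  { a ^ 2,
    a⁻¹ * (b⁻¹ * a * b)⁻¹ * a * (b⁻¹ * a * b),
    b⁻¹ * c⁻¹ * b * c,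
    (c⁻¹ * a * c)⁻¹ * (a * (b⁻¹ * a * b)),
    h⁻¹ * a⁻¹ * h * a,
    h⁻¹ * b⁻¹ * h * b,
    h⁻¹ * c⁻¹ * h * c,
    (s⁻¹ * h ^ 2 * s) * (h * a)⁻¹ }

/-- The group `G = ⟨B, h, s ∣ [h,a]=[h,b]=[h,c]=1, (h²)^s = ha⟩`. -/
def OGroup := PresentedGroup Grels

instance : Group OGroup := by unfold OGroup; infer_instance

namespace ConjAux

def π : FreeGroup (Fin 5) →* OGroup := QuotientGroup.mk' (Subgroup.normalClosure Grels)

lemma π_rel {r : FreeGroup (Fin 5)} (hr : r ∈ Grels) : π r = 1 :=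
  (QuotientGroup.eq_one_iff r).mpr (Subgroup.subset_normalClosure hr)

lemma of_eq (x : Fin 5) : (PresentedGroup.of x : OGroup) = π (FreeGroup.of x) := rfl

lemma a_sq : (PresentedGroup.of 0 : OGroup) ^ 2 = 1 := by
  have e := π_rel (r := FreeGroup.of (0 : Fin 5) ^ 2) (by simp [Grels])
  rw [map_pow] at e
  exact e

lemma rel_ha : (PresentedGroup.of 3 : OGroup)⁻¹ * (PresentedGroup.of 0)⁻¹ *
    PresentedGroup.of 3 * PresentedGroup.of 0 = 1 := by
  simp only [of_eq, ← map_inv, ← map_mul]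
  exact π_rel (by simp [Grels])

lemma rel_hb : (PresentedGroup.of 3 : OGroup)⁻¹ * (PresentedGroup.of 1)⁻¹ *
    PresentedGroup.of 3 * PresentedGroup.of 1 = 1 := by
  simp only [of_eq, ← map_inv, ← map_mul]
  exact π_rel (by simp [Grels])

lemma rel_s : (PresentedGroup.of 4 : OGroup)⁻¹ * (PresentedGroup.of 3) ^ 2 *
    PresentedGroup.of 4 * (PresentedGroup.of 3 * PresentedGroup.of 0)⁻¹ = 1 := by
  simp only [of_eq, ← map_inv, ← map_mul, ← map_pow]
  exact π_rel (by simp [Grels])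

lemma comm_ha : Commute (PresentedGroup.of 3 : OGroup) (PresentedGroup.of 0) := by
  set h : OGroup := PresentedGroup.of 3
  set a : OGroup := PresentedGroup.of 0
  have e : h * a = (a * h) * (h⁻¹ * a⁻¹ * h * a) := by group
  rw [show h⁻¹ * a⁻¹ * h * a = 1 from rel_ha, mul_one] at e
  exact e

lemma comm_hb : Commute (PresentedGroup.of 3 : OGroup) (PresentedGroup.of 1) := by
  set h : OGroup := PresentedGroup.of 3
  set b : OGroup := PresentedGroup.of 1
  have e : h * b = (b * h) * (h⁻¹ * b⁻¹ * h * b) := by group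
  rw [show h⁻¹ * b⁻¹ * h * b = 1 from rel_hb, mul_one] at e
  exact e

lemma s_conj : (PresentedGroup.of 4 : OGroup)⁻¹ * (PresentedGroup.of 3) ^ 2 *
    PresentedGroup.of 4 = PresentedGroup.of 3 * PresentedGroup.of 0 := by
  set h : OGroup := PresentedGroup.of 3
  set a : OGroup := PresentedGroup.of 0
  set s : OGroup := PresentedGroup.of 4
  have e : s⁻¹ * h ^ 2 * s = (s⁻¹ * h ^ 2 * s * (h * a)⁻¹) * (h * a) := by group
  rw [show s⁻¹ * h ^ 2 * s * (h * a)⁻¹ = 1 from rel_s, one_mul] at e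
  exact e

lemma zpowers_sq_union {G : Type*} [Group G] (t : G) :
    (zpowers t : Set G) =
      (zpowers (t ^ 2) : Set G) ∪ (fun x => x * t) '' (zpowers (t ^ 2) : Set G) := by
  ext x
  have key : ∀ m : ℤ, (t ^ 2) ^ m = t ^ (2 * m) := fun m => by
    rw [sq, (Commute.refl t).mul_zpow, ← zpow_add, two_mul]
  simp only [SetLike.mem_coe, Subgroup.mem_zpowers_iff, Set.mem_union, Set.mem_image]
  constructor
  · rintro ⟨n, rfl⟩
    rcases Int.even_or_odd n with ⟨m, hm⟩ | ⟨m, hm⟩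
    · exact Or.inl ⟨m, by rw [key, hm, two_mul]⟩
    · refine Or.inr ⟨(t ^ 2) ^ m, ⟨m, rfl⟩, ?_⟩
      rw [key, hm, zpow_add, zpow_one]
  · rintro (⟨m, rfl⟩ | ⟨_, ⟨m, rfl⟩, rfl⟩)
    · exact ⟨2 * m, (key m).symm⟩
    · exact ⟨2 * m + 1, by rw [zpow_add, zpow_one, key]⟩

end ConjAux

/-- In `G`, for every `i ∈ ℤ` and `g = (s·bⁱ)⁻¹`, one has `g⟨h²⟩g⁻¹ = ⟨h·a^{bⁱ}⟩`,
`(h·a^{bⁱ})² = h²`, and hence `g⟨h²⟩g⁻¹ = ⟨h²⟩ ∪ ⟨h²⟩·h·a^{bⁱ}`. -/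
theorem conj_zpowers_h_sq (i : ℤ) :
    letI a : OGroup := PresentedGroup.of 0
    letI b : OGroup := PresentedGroup.of 1
    letI h : OGroup := PresentedGroup.of 3
    letI s : OGroup := PresentedGroup.of 4
    letI g : OGroup := (s * b ^ i)⁻¹
    Subgroup.map (MulAut.conj g).toMonoidHom (zpowers (h ^ 2)) =
        zpowers (h * ((b ^ i)⁻¹ * a * b ^ i)) ∧
      (h * ((b ^ i)⁻¹ * a * b ^ i)) ^ 2 = h ^ 2 ∧
      (zpowers (h * ((b ^ i)⁻¹ * a * b ^ i)) : Set OGroup) =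
        (zpowers (h ^ 2) : Set OGroup) ∪
          (fun x => x * (h * ((b ^ i)⁻¹ * a * b ^ i))) '' (zpowers (h ^ 2) : Set OGroup) := by
  set a : OGroup := PresentedGroup.of 0 with ha
  set b : OGroup := PresentedGroup.of 1 with hb
  set h : OGroup := PresentedGroup.of 3 with hh
  set s : OGroup := PresentedGroup.of 4 with hs
  set A : OGroup := (b ^ i)⁻¹ * a * b ^ i with hA
  have commhb : Commute h (b ^ i) := ConjAux.comm_hb.zpow_right i
  have commhA : Commute h A :=
    (commhb.inv_right.mul_right ConjAux.comm_ha).mul_right commhb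
  have hA2 : A ^ 2 = 1 := by
    have e : A ^ 2 = (b ^ i)⁻¹ * a ^ 2 * b ^ i := by
      rw [hA, sq, sq]
      simp [mul_assoc]
    rw [e, show a ^ 2 = 1 from ConjAux.a_sq]
    group
  have ht2 : (h * A) ^ 2 = h ^ 2 := by
    rw [commhA.mul_pow, hA2, mul_one]
  refine ⟨?_, ht2, ?_⟩
  · rw [MonoidHom.map_zpowers]
    congr 1
    show (s * b ^ i)⁻¹ * h ^ 2 * ((s * b ^ i)⁻¹)⁻¹ = h * A
    have e1 : (s * b ^ i)⁻¹ * h ^ 2 * ((s * b ^ i)⁻¹)⁻¹ =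
        (b ^ i)⁻¹ * (s⁻¹ * h ^ 2 * s) * b ^ i := by group
    rw [e1, show s⁻¹ * h ^ 2 * s = h * a from ConjAux.s_conj]
    calc (b ^ i)⁻¹ * (h * a) * b ^ i = (b ^ i)⁻¹ * h * (a * b ^ i) := by group
      _ = h * (b ^ i)⁻¹ * (a * b ^ i) := by rw [commhb.inv_right.eq]
      _ = h * A := by rw [hA]; group
  · rw [ConjAux.zpowers_sq_union (h * A), ht2]
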